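/- arXiv:1208.0296 — 8 statements merged into one kernel-verified Lean document; each statement's English description precedes it below -/
import Mathlib

section
/- In a Chinese auction with continuous given budgets in which the valuations are symmetric (v_{i,j} = v_j for all players i) and strictly positive, the strategy profile in which each player i allocates x_{i,j} = (v_j/(v_1 + … + v_m))·w_i on each item j is a pure Nash equilibrium. -/
noncomputable def utilSym {n m : ℕ} (v : Fin m → ℝ) (x : Fin n → Fin m → ℝ)
    (i : Fin n) : ℝ :=
  ∑ j, (if 0 < ∑ k, x k j then x i j / (∑ k, x k j) else 0) * v j

lemma tangent (y c d : ℝ) (hy : 0 ≤ y) (hc : 0 ≤ c) (hd : 0 < d) :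
    (if 0 < y + c then y / (y + c) else 0) ≤ (d - c) / d + c * (y - d + c) / d ^ 2 := by
  rcases hc.eq_or_lt with h0 | hcpos
  · rw [← h0]
    simp only [add_zero, sub_zero, zero_mul, zero_div, div_self hd.ne']
    split_ifs with h
    · rw [div_self h.ne']
    · linarith
  · have hyc : 0 < y + c := by linarith
    rw [if_pos hyc]
    have h2 : (d - c) / d + c * (y - d + c) / d ^ 2
        = (d * (d - c) + c * (y - d + c)) / d ^ 2 := by
      field_simp
    rw [h2, div_le_div_iff₀ hyc (by positivity)]
    nlinarith [mul_nonneg hcpos.le (sq_nonneg (y + c - d))]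

/-- With symmetric, strictly positive valuations and continuous given
budgets, the profile where each player `i` places `(v j / ∑ v) * w i` on item `j`
is a pure Nash equilibrium. -/
theorem stmt1 {n m : ℕ} (v : Fin m → ℝ) (hv : ∀ j, 0 < v j)
    (w : Fin n → ℝ) (hw : ∀ i, 0 < w i)
    (x : Fin n → Fin m → ℝ) (hx : ∀ i j, x i j = (v j / ∑ k, v k) * w i) :
    ∀ i : Fin n, ∀ y : Fin m → ℝ, (∀ j, 0 ≤ y j) → (∑ j, y j = w i) →
      utilSym v (Function.update x i y) i ≤ utilSym v x i := by
  intro i y hy hsy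
  rcases Nat.eq_zero_or_pos m with hm | hm
  · subst hm; simp [utilSym]
  have : Nonempty (Fin m) := ⟨⟨0, hm⟩⟩
  set S := ∑ k, v k with hSdef
  set W := ∑ k, w k with hWdef
  have hS : 0 < S := Finset.sum_pos (fun j _ => hv j) Finset.univ_nonempty
  have hW : 0 < W := Finset.sum_pos (fun k _ => hw k) ⟨i, Finset.mem_univ i⟩
  have hwiW : w i ≤ W := Finset.single_le_sum (fun k _ => (hw k).le) (Finset.mem_univ i)
  have col : ∀ j, ∑ k, x k j = v j / S * W := by
    intro j; simp only [hx]; rw [← Finset.mul_sum]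
  have colpos : ∀ j, 0 < ∑ k, x k j := by
    intro j; rw [col j]
    have := hv j
    positivity
  have hxutil : utilSym v x i = w i / W * S := by
    unfold utilSym
    have h1 : ∀ j ∈ Finset.univ, (if 0 < ∑ k, x k j then x i j / (∑ k, x k j) else 0) * v j
        = w i / W * v j := by
      intro j _
      rw [if_pos (colpos j), col j, hx]
      have hvj := hv j
      field_simp
    rw [Finset.sum_congr rfl h1, ← Finset.mul_sum]
  have colupd : ∀ j, ∑ k, Function.update x i y k j = y j + v j / S * (W - w i) := by
    intro j
    have h1 : ∀ k, Function.update x i y k j = Function.update (fun k => x k j) i (y j) k := by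
      intro k; by_cases h : k = i <;> simp [Function.update_apply, h]
    rw [Finset.sum_congr rfl (fun k _ => h1 k), Finset.sum_update_of_mem (Finset.mem_univ i)]
    congr 1
    have h2 : ∑ k ∈ Finset.univ \ {i}, x k j = ∑ k ∈ Finset.univ.erase i, x k j := by
      rw [Finset.sdiff_singleton_eq_erase]
    rw [h2]
    have h3 : ∑ k ∈ Finset.univ.erase i, x k j = v j / S * ∑ k ∈ Finset.univ.erase i, w k := by
      simp only [hx]; rw [← Finset.mul_sum]
    rw [h3]
    congr 1
    have := Finset.add_sum_erase Finset.univ w (Finset.mem_univ i)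
    linarith
  rw [hxutil]
  unfold utilSym
  have key : ∀ j ∈ Finset.univ,
      (if 0 < ∑ k, Function.update x i y k j then
        Function.update x i y i j / (∑ k, Function.update x i y k j) else 0) * v j
      ≤ ((v j / S * W - v j / S * (W - w i)) / (v j / S * W)
          + (v j / S * (W - w i)) * (y j - v j / S * W + v j / S * (W - w i)) / (v j / S * W) ^ 2) * v j := by
    intro j _
    apply mul_le_mul_of_nonneg_right _ (hv j).le
    rw [colupd j, Function.update_self]
    exact tangent (y j) _ _ (hy j)
      (mul_nonneg (by have := hv j; positivity) (sub_nonneg.mpr hwiW))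
      (by have := hv j; positivity)
  refine le_trans (Finset.sum_le_sum key) ?_
  have eq2 : ∀ j ∈ Finset.univ,
      ((v j / S * W - v j / S * (W - w i)) / (v j / S * W)
          + (v j / S * (W - w i)) * (y j - v j / S * W + v j / S * (W - w i)) / (v j / S * W) ^ 2) * v j
      = w i / W * v j + (W - w i) * S / W ^ 2 * (y j - v j * w i / S) := by
    intro j _
    have hvj := (hv j).ne'
    field_simp
    ring
  rw [Finset.sum_congr rfl eq2, Finset.sum_add_distrib, ← Finset.mul_sum, ← Finset.mul_sum]
  have : ∑ j, (y j - v j * w i / S) = 0 := by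
    rw [Finset.sum_sub_distrib, hsy]
    have h4 : ∑ j, v j * w i / S = w i := by
      rw [← Finset.sum_div, ← Finset.sum_mul, ← hSdef, mul_comm, mul_div_assoc,
        div_self hS.ne', mul_one]
    rw [h4, sub_self]
  rw [this, mul_zero, add_zero, mul_comm]
end

section
/- The two-player, two-item Chinese auction with continuous given budgets in which v_{1,1} = 0, v_{1,2} = 1, v_{2,1} = 1, v_{2,2} = 3 and w_1 = w_2 = 1 has no pure Nash equilibrium. (Hence Chinese auctions with asymmetric valuations and asymmetric continuous budgets need not have a pure Nash equilibrium when some valuations are zero.) -/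
/-- Utility of player `i` in a Chinese auction with given budgets and valuations
`v i j`. -/
noncomputable def util {n m : ℕ} (v : Fin n → Fin m → ℝ) (x : Fin n → Fin m → ℝ)
    (i : Fin n) : ℝ :=
  ∑ j, (if 0 < ∑ k, x k j then x i j / (∑ k, x k j) else 0) * v i j

/-- The two-player, two-item Chinese auction with continuous given budgets,
valuations `v₁ = (0,1)`, `v₂ = (1,3)` and budgets `w₁ = w₂ = 1`, has no pure Nash
equilibrium. -/
theorem stmt3 :
    ¬ ∃ x : Fin 2 → Fin 2 → ℝ,
      (∀ i j, 0 ≤ x i j) ∧ (∀ i, ∑ j, x i j = 1) ∧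
      (∀ i : Fin 2, ∀ y : Fin 2 → ℝ, (∀ j, 0 ≤ y j) → (∑ j, y j = 1) →
        util ![![0, 1], ![1, 3]] (Function.update x i y) i ≤
          util ![![0, 1], ![1, 3]] x i) := by
  rintro ⟨x, hnn, hsum, hyp⟩
  have h0 : x 0 0 + x 0 1 = 1 := by simpa [Fin.sum_univ_two] using hsum 0
  have h1 : x 1 0 + x 1 1 = 1 := by simpa [Fin.sum_univ_two] using hsum 1
  have n00 := hnn 0 0; have n01 := hnn 0 1
  have n10 := hnn 1 0; have n11 := hnn 1 1
  rcases lt_or_eq_of_le n11 with hb | hb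
  · -- x 1 1 > 0 : player 0 must put everything on item 2
    have ha : x 0 1 = 1 := by
      by_contra hne
      have ha1 : x 0 1 < 1 := lt_of_le_of_ne (by linarith) hne
      have H := hyp 0 ![0, 1] (by intro j; fin_cases j <;> norm_num)
        (by simp [Fin.sum_univ_two])
      have p1 : (0:ℝ) < x 0 1 + x 1 1 := by linarith
      have p2 : (0:ℝ) < 1 + x 1 1 := by linarith
      simp [util, Fin.sum_univ_two, Function.update, p1, p2] at H
      rw [show (1 + x 1 1)⁻¹ = 1 / (1 + x 1 1) from (one_div _).symm,
        div_le_div_iff₀ (by linarith) (by linarith)] at H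
      nlinarith
    have ha0 : x 0 0 = 0 := by linarith
    rcases lt_or_eq_of_le n10 with hc | hc
    · -- x 1 0 > 0 : player 1 deviates, halving its bid on item 1
      have p1 : (0:ℝ) < x 1 0 := hc
      have p2 : (0:ℝ) < 1 + (1 - x 1 0 / 2) := by linarith
      have p3 : (0:ℝ) < x 1 0 / 2 := by linarith
      have p4 : (0:ℝ) < 1 + x 1 1 := by linarith
      have e1 : x 1 0 / 2 / (x 1 0 / 2) = 1 := by field_simp
      have e2 : x 1 0 / x 1 0 = 1 := by field_simp
      have H := hyp 1 ![x 1 0 / 2, 1 - x 1 0 / 2]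
        (by intro j; fin_cases j <;> simp <;> linarith)
        (by simp [Fin.sum_univ_two])
      simp [util, Fin.sum_univ_two, Function.update, ha0, ha, p1, p2, p3, p4,
        e1, e2] at H
      have H2 : (1 - x 1 0 / 2) / (1 + (1 - x 1 0 / 2)) ≤ x 1 1 / (1 + x 1 1) := by
        linarith
      rw [div_le_div_iff₀ (by linarith) (by linarith)] at H2
      nlinarith
    · -- x 1 0 = 0, so x 1 1 = 1 : player 1 deviates to (1/2,1/2)
      have hx : x 1 1 = 1 := by linarith
      have H := hyp 1 ![1/2, 1/2] (by intro j; fin_cases j <;> norm_num)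
        (by norm_num [Fin.sum_univ_two])
      simp [util, Fin.sum_univ_two, Function.update, ha0, ha, ← hc, hx] at H
      norm_num at H
  · -- x 1 1 = 0, x 1 0 = 1
    have hc : x 1 0 = 1 := by linarith
    rcases lt_or_eq_of_le n01 with hd | hd
    · -- x 0 1 > 0 : player 1 deviates to (1/2,1/2)
      have hp1 : (0:ℝ) < x 0 0 + 2⁻¹ := by linarith
      have hp2 : (0:ℝ) < x 0 1 + 2⁻¹ := by linarith
      have hp3 : (0:ℝ) < x 0 0 + 1 := by linarith
      have H := hyp 1 ![1/2, 1/2] (by intro j; fin_cases j <;> norm_num)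
        (by norm_num [Fin.sum_univ_two])
      simp [util, Fin.sum_univ_two, Function.update, hc, ← hb, hp1, hp2, hp3] at H
      have t1 : (0:ℝ) < 2⁻¹ / (x 0 0 + 2⁻¹) := by positivity
      have t2 : (1:ℝ) ≤ 2⁻¹ / (x 0 1 + 2⁻¹) * 3 := by
        rw [div_mul_eq_mul_div, le_div_iff₀ hp2]; linarith
      have t3 : (x 0 0 + 1)⁻¹ ≤ 1 := by
        rw [inv_le_one_iff₀]; right; linarith
      linarith
    · -- x 0 1 = 0 : player 0 deviates to (0,1)
      have H := hyp 0 ![0, 1] (by intro j; fin_cases j <;> norm_num)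
        (by simp [Fin.sum_univ_two])
      simp [util, Fin.sum_univ_two, Function.update, ← hb, ← hd] at H
      linarith
end

section
/- Every Chinese auction with symmetric strictly positive valuations (v_{i,j} = v_j > 0 for all players i) and indivisible budgets, in which each player i has a single indivisible ticket of weight w_i > 0, has a pure Nash equilibrium. Moreover, the assignment produced by the following greedy procedure is such an equilibrium: process the players in decreasing order of ticket weight, and assign the ticket of each player k to an item j maximizing (w_k/(X_j + w_k))·v_j, where X_j is the total weight of tickets already assigned to item j. -/
/-- Utility of player `i` under assignment `s` in a Chinese auction with indivisible
budgets (one ticket of weight `w i` per player) and symmetric valuations `v`. -/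
noncomputable def utilInd {n m : ℕ} (v : Fin m → ℝ) (w : Fin n → ℝ)
    (s : Fin n → Fin m) (i : Fin n) : ℝ :=
  (w i / ∑ k, if s k = s i then w k else 0) * v (s i)

/-- `s` is a pure Nash equilibrium: no player can strictly gain by moving their single
ticket to another item. -/
def isPNEInd {n m : ℕ} (v : Fin m → ℝ) (w : Fin n → ℝ) (s : Fin n → Fin m) : Prop :=
  ∀ i : Fin n, ∀ j : Fin m,
    (w i / (w i + ∑ k, if k ≠ i ∧ s k = j then w k else 0)) * v j ≤ utilInd v w s i

/-- Total weight placed on item `j` by the players preceding `k` (in the processing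
order) under assignment `s`. -/
noncomputable def prefW {n m : ℕ} (w : Fin n → ℝ) (s : Fin n → Fin m)
    (k : Fin n) (j : Fin m) : ℝ :=
  ∑ i, if i < k ∧ s i = j then w i else 0

lemma prefW_nonneg {n m : ℕ} {w : Fin n → ℝ} (hw : ∀ i, 0 < w i)
    (s : Fin n → Fin m) (k : Fin n) (j : Fin m) : 0 ≤ prefW w s k j := by
  apply Finset.sum_nonneg
  intro i _
  split
  · exact (hw i).le
  · exact le_rfl

lemma prefW_congr {n m : ℕ} (w : Fin n → ℝ) (s₁ s₂ : Fin n → Fin m) (k : Fin n)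
    (h : ∀ i, i < k → s₁ i = s₂ i) (j : Fin m) : prefW w s₁ k j = prefW w s₂ k j := by
  unfold prefW
  apply Finset.sum_congr rfl
  intro i _
  by_cases hik : i < k
  · rw [h i hik]
  · simp [hik]

/-- The greedy assignment is a pure Nash equilibrium (second part of the theorem),
stated as a standalone lemma. -/
lemma greedy_is_pne {n m : ℕ} (v : Fin m → ℝ) (hv : ∀ j, 0 < v j)
    (w : Fin n → ℝ) (hw : ∀ i, 0 < w i) (s : Fin n → Fin m)
    (hdec : ∀ i i' : Fin n, i ≤ i' → w i' ≤ w i)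
    (hg : ∀ k : Fin n, ∀ j : Fin m,
      (w k / (prefW w s k j + w k)) * v j ≤
        (w k / (prefW w s k (s k) + w k)) * v (s k)) :
    isPNEInd v w s := by
  intro i j
  -- total weight on item s i
  set W : ℝ := ∑ k, if s k = s i then w k else 0 with hWdef
  by_cases hji : j = s i
  · -- staying put: equality of denominators
    subst hji
    have hsum : W = w i + ∑ k, if k ≠ i ∧ s k = s i then w k else 0 := by
      rw [hWdef]
      have : ∀ k : Fin n, (if s k = s i then w k else 0)
          = (if k = i then w k else 0) + (if k ≠ i ∧ s k = s i then w k else 0) := by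
        intro k
        by_cases hk : k = i
        · subst hk; simp
        · simp [hk]
      rw [Finset.sum_congr rfl (fun k _ => this k), Finset.sum_add_distrib,
        Finset.sum_ite_eq' Finset.univ i w]
      simp
    rw [utilInd, ← hWdef, hsum]
  · -- deviation to a different item
    -- t : the last player on item (s i)
    have hiS : i ∈ Finset.univ.filter (fun k => s k = s i) := by simp
    have hSne : (Finset.univ.filter (fun k => s k = s i)).Nonempty := ⟨i, hiS⟩
    set t := (Finset.univ.filter (fun k => s k = s i)).max' hSne with ht
    have hts : s t = s i := by
      have := (Finset.univ.filter (fun k => s k = s i)).max'_mem hSne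
      simpa using this
    have hit : i ≤ t := Finset.le_max' _ i hiS
    have hwt : w t ≤ w i := hdec i t hit
    -- W = prefW w s t (s i) + w t
    have hW : W = prefW w s t (s i) + w t := by
      rw [hWdef, prefW]
      have key : ∀ k : Fin n, (if s k = s i then w k else 0)
          = (if k < t ∧ s k = s i then w k else 0) + (if k = t then w k else 0) := by
        intro k
        by_cases hk : k = t
        · subst hk
          simp [hts]
        · by_cases hks : s k = s i
          · have hkmem : k ∈ Finset.univ.filter (fun k => s k = s i) := by simp [hks]
            have hle : k ≤ t := Finset.le_max' _ k hkmem
            have hlt : k < t := lt_of_le_of_ne hle hk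
            simp [hks, hlt, hk]
          · simp [hks, hk]
      rw [Finset.sum_congr rfl (fun k _ => key k), Finset.sum_add_distrib,
        Finset.sum_ite_eq' Finset.univ t w]
      simp
    -- deviation denominator
    set D : ℝ := ∑ k, if k ≠ i ∧ s k = j then w k else 0 with hDdef
    have hDnonneg : 0 ≤ D := by
      apply Finset.sum_nonneg
      intro k _
      split
      · exact (hw k).le
      · exact le_rfl
    have hprefD : prefW w s t j ≤ D := by
      rw [prefW, hDdef]
      apply Finset.sum_le_sum
      intro k _
      by_cases hk : k < t ∧ s k = j
      · have hki : k ≠ i := by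
          intro he; subst he; exact hji (hk.2.symm ▸ rfl)
        simp [hk, hki, hk.2]
      · simp only [hk, if_false]
        split
        · exact (hw k).le
        · exact le_rfl
    have hA : 0 < prefW w s t j + w t :=
      add_pos_of_nonneg_of_pos (prefW_nonneg hw s t j) (hw t)
    have hWpos : 0 < W := by
      rw [hW]; exact add_pos_of_nonneg_of_pos (prefW_nonneg hw s t (s i)) (hw t)
    -- greedy inequality at t, divided by w t
    have hgt := hg t j
    rw [hts, ← hW] at hgt
    have hdiv : v j / (prefW w s t j + w t) ≤ v (s i) / W := by
      have h1 : w t * (v j / (prefW w s t j + w t)) ≤ w t * (v (s i) / W) := by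
        calc w t * (v j / (prefW w s t j + w t))
            = (w t / (prefW w s t j + w t)) * v j := by ring
          _ ≤ (w t / W) * v (s i) := hgt
          _ = w t * (v (s i) / W) := by ring
      exact le_of_mul_le_mul_left h1 (hw t)
    have hdenom : prefW w s t j + w t ≤ w i + D := by
      calc prefW w s t j + w t ≤ D + w i := add_le_add hprefD hwt
        _ = w i + D := by ring
    have h2 : v j / (w i + D) ≤ v j / (prefW w s t j + w t) :=
      div_le_div_of_nonneg_left (hv j).le hA hdenom
    have h3 : v j / (w i + D) ≤ v (s i) / W := le_trans h2 hdiv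
    have h4 : w i * (v j / (w i + D)) ≤ w i * (v (s i) / W) :=
      mul_le_mul_of_nonneg_left h3 (hw i).le
    calc (w i / (w i + D)) * v j = w i * (v j / (w i + D)) := by ring
      _ ≤ w i * (v (s i) / W) := h4
      _ = (w i / W) * v (s i) := by ring
      _ = utilInd v w s i := by rw [utilInd, ← hWdef]

/-- Choose a maximizer of a real-valued function on a nonempty `Fin m`. -/
noncomputable def amax {m : ℕ} (j0 : Fin m) (f : Fin m → ℝ) : Fin m :=
  Classical.choose (Finset.exists_max_image Finset.univ f ⟨j0, Finset.mem_univ _⟩)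

lemma amax_spec {m : ℕ} (j0 : Fin m) (f : Fin m → ℝ) (j : Fin m) : f j ≤ f (amax j0 f) :=
  (Classical.choose_spec
    (Finset.exists_max_image Finset.univ f ⟨j0, Finset.mem_univ _⟩)).2 j (Finset.mem_univ _)

/-- Greedy partial assignments: `gseq j0 v w k` assigns players `0, …, k-1` greedily. -/
noncomputable def gseq {n m : ℕ} (j0 : Fin m) (v : Fin m → ℝ) (w : Fin n → ℝ) :
    ℕ → (Fin n → Fin m)
  | 0 => fun _ => j0
  | (k+1) =>
    if h : k < n then
      Function.update (gseq j0 v w k) ⟨k, h⟩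
        (amax j0 (fun j =>
          (w ⟨k, h⟩ / (prefW w (gseq j0 v w k) ⟨k, h⟩ j + w ⟨k, h⟩)) * v j))
    else gseq j0 v w k

lemma gseq_succ {n m : ℕ} (j0 : Fin m) (v : Fin m → ℝ) (w : Fin n → ℝ) (k : ℕ) :
    gseq j0 v w (k+1) =
      if h : k < n then
        Function.update (gseq j0 v w k) ⟨k, h⟩
          (amax j0 (fun j =>
            (w ⟨k, h⟩ / (prefW w (gseq j0 v w k) ⟨k, h⟩ j + w ⟨k, h⟩)) * v j))
      else gseq j0 v w k := rfl

lemma gseq_agree {n m : ℕ} (j0 : Fin m) (v : Fin m → ℝ) (w : Fin n → ℝ)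
    (a b : ℕ) (hab : a ≤ b) (i : Fin n) (hi : (i : ℕ) < a) :
    gseq j0 v w b i = gseq j0 v w a i := by
  induction b, hab using Nat.le_induction with
  | base => rfl
  | succ b hab ih =>
    have hib : (i : ℕ) ≠ b := Nat.ne_of_lt (lt_of_lt_of_le hi hab)
    rw [← ih, gseq_succ]
    split
    · rename_i h
      apply Function.update_of_ne
      intro he
      apply hib
      rw [he]
    · rfl

lemma gseq_greedy {n m : ℕ} (j0 : Fin m) (v : Fin m → ℝ) (w : Fin n → ℝ) (k : Fin n) :
    ∀ j : Fin m,
      (w k / (prefW w (gseq j0 v w n) k j + w k)) * v j ≤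
        (w k / (prefW w (gseq j0 v w n) k (gseq j0 v w n k) + w k)) * v (gseq j0 v w n k) := by
  set s := gseq j0 v w n with hs
  have hagree : ∀ i : Fin n, i < k → gseq j0 v w (k : ℕ) i = s i := by
    intro i hik
    rw [hs, gseq_agree j0 v w (k : ℕ) n (le_of_lt k.2) i hik]
  have hpref : ∀ j, prefW w (gseq j0 v w (k : ℕ)) k j = prefW w s k j := by
    intro j
    exact prefW_congr w _ _ k hagree j
  have hsk : s k = amax j0 (fun j =>
      (w k / (prefW w (gseq j0 v w (k : ℕ)) k j + w k)) * v j) := by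
    have h1 : s k = gseq j0 v w ((k : ℕ) + 1) k := by
      rw [hs, gseq_agree j0 v w ((k : ℕ) + 1) n k.2 k (Nat.lt_succ_self _)]
    rw [h1, gseq_succ, dif_pos k.2]
    simp only [Fin.eta]
    rw [Function.update_self]
  intro j
  have := amax_spec j0 (fun j =>
    (w k / (prefW w (gseq j0 v w (k : ℕ)) k j + w k)) * v j) j
  rw [← hsk] at this
  simpa [hpref] using this

/-- Transport of pure Nash equilibria along a permutation of the players. -/
lemma pne_perm {n m : ℕ} (v : Fin m → ℝ) (w : Fin n → ℝ) (σ : Equiv.Perm (Fin n))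
    (s' : Fin n → Fin m) (h : isPNEInd v (fun i => w (σ i)) s') :
    isPNEInd v w (fun i => s' (σ.symm i)) := by
  intro i j
  have key := h (σ.symm i) j
  rw [utilInd] at key
  simp only [Equiv.apply_symm_apply] at key
  have hsum1 : (∑ k, if s' (σ.symm k) = s' (σ.symm i) then w k else 0)
      = ∑ k, if s' k = s' (σ.symm i) then w (σ k) else 0 := by
    apply (Fintype.sum_equiv σ _ _ _).symm
    intro x
    simp
  have hsum2 : (∑ k, if k ≠ i ∧ s' (σ.symm k) = j then w k else 0)
      = ∑ k, if k ≠ σ.symm i ∧ s' k = j then w (σ k) else 0 := by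
    apply (Fintype.sum_equiv σ _ _ _).symm
    intro x
    by_cases hx : x ≠ σ.symm i ∧ s' x = j
    · have hσx : σ x ≠ i := by
        intro he
        exact hx.1 (by rw [← he, Equiv.symm_apply_apply])
      simp [hx, hx.1, hx.2, hσx]
    · push_neg at hx
      by_cases hx1 : x = σ.symm i
      · subst hx1
        simp
      · have := hx hx1
        simp [hx1, this]
  rw [← hsum1, ← hsum2] at key
  exact key

/-- Every Chinese auction with symmetric strictly positive valuations and
indivisible budgets has a pure Nash equilibrium; moreover, if the players are processed
in decreasing order of ticket weight and each player `k` is assigned to an item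
maximizing `(w k / (X_j + w k)) * v j` (where `X_j` is the weight already on item `j`),
the resulting assignment is a pure Nash equilibrium. -/
theorem stmt8 {n m : ℕ} (hm : 0 < m)
    (v : Fin m → ℝ) (hv : ∀ j, 0 < v j)
    (w : Fin n → ℝ) (hw : ∀ i, 0 < w i) :
    (∃ s : Fin n → Fin m, isPNEInd v w s) ∧
    (∀ s : Fin n → Fin m,
      (∀ i i' : Fin n, i ≤ i' → w i' ≤ w i) →
      (∀ k : Fin n, ∀ j : Fin m,
        (w k / (prefW w s k j + w k)) * v j ≤
          (w k / (prefW w s k (s k) + w k)) * v (s k)) →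
      isPNEInd v w s) := by
  constructor
  · -- existence via greedy on the sorted weights
    obtain ⟨σ, hσmono⟩ : ∃ σ : Equiv.Perm (Fin n),
        ∀ i i' : Fin n, i ≤ i' → w (σ i') ≤ w (σ i) := by
      refine ⟨Tuple.sort (fun i => -w i), fun i i' hii => ?_⟩
      have hmono := Tuple.monotone_sort (fun i => -w i) hii
      simp only [Function.comp_apply] at hmono
      linarith
    have hw'pos : ∀ i, 0 < (fun i => w (σ i)) i := fun i => hw (σ i)
    have hpne' : isPNEInd v (fun i => w (σ i)) (gseq ⟨0, hm⟩ v (fun i => w (σ i)) n) :=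
      greedy_is_pne v hv _ hw'pos _ hσmono (gseq_greedy ⟨0, hm⟩ v (fun i => w (σ i)))
    exact ⟨fun i => gseq ⟨0, hm⟩ v (fun i => w (σ i)) n (σ.symm i), pne_perm v w σ _ hpne'⟩
  · intro s hdec hg
    exact greedy_is_pne v hv w hw s hdec hg
end

section
/- Every Chinese auction with two items, arbitrary strictly positive (possibly asymmetric) valuations v_{i,1}, v_{i,2} > 0, and asymmetric indivisible budgets, in which each player i has a single indivisible ticket of weight w_i > 0, has a pure Nash equilibrium. -/
open Finset

/-- Utility of player `i` under assignment `s` in a Chinese auction with two items,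
indivisible budgets (one ticket of weight `w i` per player) and valuations `v i j`. -/
noncomputable def utilInd2 {n : ℕ} (v : Fin n → Fin 2 → ℝ) (w : Fin n → ℝ)
    (s : Fin n → Fin 2) (i : Fin n) : ℝ :=
  (w i / ∑ k, if s k = s i then w k else 0) * v i (s i)

/-- Greedy construction: processing players in order of decreasing threshold `a i`,
there is a set `S ⊆ F` such that every member's threshold is at least `c` plus the
total weight of `S`, and every non-member's threshold is at most that plus its own weight. -/
lemma greedyAux {n : ℕ} (a w : Fin n → ℝ) (hw : ∀ i, 0 < w i) :
    ∀ (F : Finset (Fin n)) (c : ℝ),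
      ∃ S : Finset (Fin n), S ⊆ F ∧ (∀ i ∈ S, c + ∑ k ∈ S, w k ≤ a i) ∧
        (∀ i ∈ F, i ∉ S → a i ≤ c + ∑ k ∈ S, w k + w i) := by
  intro F
  induction F using Finset.strongInduction with
  | _ F ih =>
    intro c
    rcases F.eq_empty_or_nonempty with rfl | hne
    · exact ⟨∅, by simp⟩
    · obtain ⟨i0, hi0F, hmax⟩ := Finset.exists_max_image F a hne
      by_cases hc : c + w i0 ≤ a i0
      · obtain ⟨S', hS'sub, hin, hout⟩ := ih (F.erase i0) (Finset.erase_ssubset hi0F) (c + w i0)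
        have hi0S' : i0 ∉ S' := fun h => (Finset.mem_erase.mp (hS'sub h)).1 rfl
        have hsum : ∑ k ∈ insert i0 S', w k = w i0 + ∑ k ∈ S', w k :=
          Finset.sum_insert hi0S'
        refine ⟨insert i0 S', ?_, ?_, ?_⟩
        · intro x hx
          rcases Finset.mem_insert.mp hx with rfl | hx
          · exact hi0F
          · exact Finset.mem_of_mem_erase (hS'sub hx)
        · intro i hi
          rw [hsum]
          rcases Finset.mem_insert.mp hi with rfl | hi
          · rcases S'.eq_empty_or_nonempty with rfl | ⟨j, hj⟩
            · simpa using hc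
            · have := hin j hj
              have hja := hmax j (Finset.mem_of_mem_erase (hS'sub hj))
              linarith
          · have := hin i hi
            linarith
        · intro i hiF hiS
          have hi1 : i ≠ i0 := fun h => hiS (h ▸ Finset.mem_insert_self i0 S')
          have hi2 : i ∉ S' := fun h => hiS (Finset.mem_insert_of_mem h)
          have := hout i (Finset.mem_erase.mpr ⟨hi1, hiF⟩) hi2
          rw [hsum]; linarith
      · obtain ⟨S', hS'sub, hin, hout⟩ := ih (F.erase i0) (Finset.erase_ssubset hi0F) c
        refine ⟨S', fun x hx => Finset.mem_of_mem_erase (hS'sub hx), hin, ?_⟩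
        intro i hiF hiS
        by_cases hi : i = i0
        · subst hi
          have hpos : (0:ℝ) ≤ ∑ k ∈ S', w k :=
            Finset.sum_nonneg fun k _ => (hw k).le
          linarith
        · exact hout i (Finset.mem_erase.mpr ⟨hi, hiF⟩) hiS

/-- Every Chinese auction with two items, strictly positive (possibly
asymmetric) valuations, and asymmetric indivisible budgets (one ticket of weight
`w i > 0` per player) has a pure Nash equilibrium. -/
theorem stmt10 {n : ℕ} (v : Fin n → Fin 2 → ℝ) (hv : ∀ i j, 0 < v i j)
    (w : Fin n → ℝ) (hw : ∀ i, 0 < w i) :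
    ∃ s : Fin n → Fin 2,
      ∀ i : Fin n, ∀ j : Fin 2,
        (w i / (w i + ∑ k, if k ≠ i ∧ s k = j then w k else 0)) * v i j ≤
          utilInd2 v w s i := by
  set T : ℝ := ∑ k, w k with hT
  set a : Fin n → ℝ := fun i => v i 1 * (T + w i) / (v i 0 + v i 1) with ha
  obtain ⟨S, -, hin, hout⟩ := greedyAux a w hw Finset.univ 0
  set X : ℝ := ∑ k ∈ S, w k with hX
  set Y : ℝ := ∑ k ∈ Sᶜ, w k with hY
  have hXY : X + Y = T := by
    rw [hX, hY, hT, Finset.sum_add_sum_compl]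
  have hXnn : 0 ≤ X := Finset.sum_nonneg fun k _ => (hw k).le
  have hYnn : 0 ≤ Y := Finset.sum_nonneg fun k _ => (hw k).le
  set s : Fin n → Fin 2 := fun i => if i ∈ S then 1 else 0 with hs
  -- sums identification
  have hsum1 : (∑ k, if s k = (1 : Fin 2) then w k else 0) = X := by
    rw [hX, ← Finset.sum_filter]
    congr 1
    ext k
    by_cases h : k ∈ S <;> simp [hs, h]
  have hsum0 : (∑ k, if s k = (0 : Fin 2) then w k else 0) = Y := by
    rw [hY, ← Finset.sum_filter]
    congr 1
    ext k
    by_cases h : k ∈ S <;> simp [hs, h]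
  refine ⟨s, ?_⟩
  intro i j
  -- split off the diagonal case
  by_cases hji : j = s i
  · -- equality case: the deviation to own item gives the same utility
    subst hji
    have hden : (w i + ∑ k, if k ≠ i ∧ s k = s i then w k else 0)
        = ∑ k, if s k = s i then w k else 0 := by
      have : (∑ k, if s k = s i then w k else 0)
          = ∑ k, ((if k = i then w k else 0) + (if k ≠ i ∧ s k = s i then w k else 0)) := by
        apply Finset.sum_congr rfl
        intro k _
        by_cases h : k = i
        · subst h; simp
        · simp [h]
      rw [this, Finset.sum_add_distrib, Finset.sum_ite_eq' Finset.univ i w]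
      simp
    rw [utilInd2, hden]
  · -- deviation case: s i ≠ j, so the condition k ≠ i is redundant
    have hoff : (∑ k, if k ≠ i ∧ s k = j then w k else 0)
        = ∑ k, if s k = j then w k else 0 := by
      apply Finset.sum_congr rfl
      intro k _
      by_cases h : k = i
      · subst h; simp [Ne.symm hji]
      · simp [h]
    rw [hoff, utilInd2]
    by_cases hiS : i ∈ S
    · -- s i = 1, j = 0
      have hsi : s i = 1 := by simp [hs, hiS]
      have hj0 : j = 0 := by
        fin_cases j
        · rfl
        · exact absurd (by simp [hsi]) hji
      subst hj0
      rw [hsi, hsum0, hsum1]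
      have hwX : w i ≤ X := Finset.single_le_sum (fun k _ => (hw k).le) hiS
      have hXpos : 0 < X := lt_of_lt_of_le (hw i) hwX
      have hkey : X ≤ a i := by have := hin i hiS; linarith
      have hvpos : 0 < v i 0 + v i 1 := by have := hv i 0; have := hv i 1; linarith
      have hkey2 : X * (v i 0 + v i 1) ≤ v i 1 * (T + w i) := by
        rw [ha] at hkey
        exact (le_div_iff₀ hvpos).mp hkey
      rw [← hXY] at hkey2
      have h1 : X * v i 0 ≤ v i 1 * (Y + w i) := by nlinarith [hkey2]
      rw [div_mul_eq_mul_div, div_mul_eq_mul_div]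
      rw [div_le_div_iff₀ (by linarith [hw i]) hXpos]
      nlinarith [mul_le_mul_of_nonneg_left h1 (hw i).le]
    · -- s i = 0, j = 1
      have hsi : s i = 0 := by simp [hs, hiS]
      have hj1 : j = 1 := by
        fin_cases j
        · exact absurd (by simp [hsi]) hji
        · rfl
      subst hj1
      rw [hsi, hsum0, hsum1]
      have hiSc : i ∈ Sᶜ := Finset.mem_compl.mpr hiS
      have hwY : w i ≤ Y := Finset.single_le_sum (fun k _ => (hw k).le) hiSc
      have hYpos : 0 < Y := lt_of_lt_of_le (hw i) hwY
      have hkey : a i ≤ X + w i := by have := hout i (Finset.mem_univ i) hiS; linarith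
      have hvpos : 0 < v i 0 + v i 1 := by have := hv i 0; have := hv i 1; linarith
      have hkey2 : v i 1 * (T + w i) ≤ (X + w i) * (v i 0 + v i 1) := by
        rw [ha] at hkey
        exact (div_le_iff₀ hvpos).mp hkey
      rw [← hXY] at hkey2
      have h1 : v i 1 * Y ≤ (X + w i) * v i 0 := by nlinarith [hkey2]
      rw [div_mul_eq_mul_div, div_mul_eq_mul_div]
      rw [div_le_div_iff₀ (by linarith [hw i]) hYpos]
      nlinarith [mul_le_mul_of_nonneg_left h1 (hw i).le]
end

section
/- Every Chinese auction with arbitrary (possibly asymmetric) nonnegative valuations and symmetric indivisible budgets, in which each player has a single indivisible ticket of weight 1, has a pure Nash equilibrium. That is, for any n players, m items, and valuations v_{i,j} ≥ 0, there is an assignment s of players to items such that for every player i and every item j, v_{i,j}/(1 + n_j(s)) ≤ v_{i,s_i}/n_{s_i}(s), where n_j(s) is the number of players assigned to item j. -/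
/-- Every Chinese auction with arbitrary nonnegative (possibly
asymmetric) valuations and symmetric indivisible budgets (each player has one ticket
of weight 1) has a pure Nash equilibrium: there is an assignment `s` of players to
items such that for every player `i` and item `j`,
`v i j / (n_j(s) + 1) ≤ v i (s i) / n_{s i}(s)`, where `n_j(s)` is the number of
players assigned to item `j`. -/
theorem stmt11 {n m : ℕ} (hm : 0 < m)
    (v : Fin n → Fin m → ℝ) (hv : ∀ i j, 0 ≤ v i j) :
    ∃ s : Fin n → Fin m,
      ∀ i : Fin n, ∀ j : Fin m,
        v i j / (((Finset.univ.filter fun k => s k = j).card : ℝ) + 1) ≤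
          v i (s i) / ((Finset.univ.filter fun k => s k = s i).card : ℝ) := by
  classical
  have hFm : Nonempty (Fin m) := ⟨⟨0, hm⟩⟩
  -- the big constant
  set S : ℝ := ∑ p : Fin n × Fin m, |if v p.1 p.2 = 0 then (0:ℝ) else Real.log (v p.1 p.2)|
    with hSdef
  have hS0 : 0 ≤ S := Finset.sum_nonneg fun p _ => abs_nonneg _
  set M : ℝ := 1 + Real.log (n + 1) + S with hMdef
  -- modified log
  set f : ℝ → ℝ := fun x => if x = 0 then -M else Real.log x with hfdef
  -- counting function
  set N : (Fin n → Fin m) → Fin m → ℕ :=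
    fun s j => (Finset.univ.filter fun k => s k = j).card with hNdef
  -- potential
  set Φ : (Fin n → Fin m) → ℝ :=
    fun s => (∑ i, f (v i (s i))) - ∑ j, Real.log (Nat.factorial (N s j)) with hΦdef
  obtain ⟨s, hs⟩ := Finite.exists_max Φ
  refine ⟨s, ?_⟩
  intro i j
  have hNsi : 1 ≤ N s (s i) := Finset.card_pos.mpr ⟨i, by simp⟩
  have hBpos : (0:ℝ) < (N s (s i) : ℝ) := by exact_mod_cast hNsi
  by_cases hj : j = s i
  · subst hj
    have h1 : (N s (s i) : ℝ) ≤ (N s (s i) : ℝ) + 1 := by linarith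
    exact div_le_div_of_nonneg_left (hv i (s i)) hBpos h1 |>.trans_eq rfl
      |>.trans (le_refl _) |>.trans (le_refl _)
  · by_contra hcon
    push_neg at hcon
    -- notation
    set a : ℝ := v i j with hadef
    set b : ℝ := v i (s i) with hbdef
    set A : ℝ := (N s j : ℝ) + 1 with hAdef
    set B : ℝ := (N s (s i) : ℝ) with hBdef
    have hApos : (0:ℝ) < A := by positivity
    have hAn : A ≤ (n:ℝ) + 1 := by
      have : N s j ≤ n := by
        simpa using (Finset.card_filter_le Finset.univ fun k => s k = j)
      rw [hAdef]
      have : (N s j : ℝ) ≤ n := by exact_mod_cast this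
      linarith
    have hlt : b / B < a / A := hcon
    have hapos : 0 < a := by
      have h1 : 0 < a / A :=
        lt_of_le_of_lt (div_nonneg (hv i (s i)) hBpos.le) hlt
      rcases div_pos_iff.mp h1 with ⟨h, _⟩ | ⟨_, h⟩
      · exact h
      · linarith
    -- the improving deviation
    set s' : Fin n → Fin m := Function.update s i j with hs'def
    -- counting after deviation
    have hcount1 : N s' j = N s j + 1 := by
      have : (Finset.univ.filter fun k => s' k = j)
          = insert i (Finset.univ.filter fun k => s k = j) := by
        ext k
        by_cases hk : k = i
        · subst hk; simp [hs'def]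
        · simp [hs'def, Function.update_of_ne hk, hk]
      rw [hNdef]
      simp only [this]
      rw [Finset.card_insert_of_notMem (by simp [Ne.symm hj])]
    have hcount2 : N s' (s i) = N s (s i) - 1 := by
      have : (Finset.univ.filter fun k => s' k = s i)
          = (Finset.univ.filter fun k => s k = s i).erase i := by
        ext k
        by_cases hk : k = i
        · subst hk; simp [hs'def, fun h => hj h]
        · simp [hs'def, Function.update_of_ne hk, hk]
      rw [hNdef]
      simp only [this]
      rw [Finset.card_erase_of_mem (by simp)]
    have hcount3 : ∀ l, l ≠ j → l ≠ s i → N s' l = N s l := by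
      intro l h1 h2
      have hfe : (Finset.univ.filter fun k => s' k = l)
          = (Finset.univ.filter fun k => s k = l) := by
        ext k
        simp only [Finset.mem_filter, Finset.mem_univ, true_and]
        by_cases hk : k = i
        · subst hk
          rw [hs'def, Function.update_self]
          exact iff_of_false (fun h => h1 h.symm) (fun h => h2 h.symm)
        · rw [hs'def, Function.update_of_ne hk]
      rw [hNdef]
      simp only [hfe]
    -- player-sum difference
    have hplayer : (∑ i', f (v i' (s' i'))) - (∑ i', f (v i' (s i')))
        = f a - f b := by
      have key : ∑ i', (f (v i' (s' i')) - f (v i' (s i'))) = f a - f b := by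
        rw [← Finset.sum_subset (Finset.subset_univ {i})
          (fun x _ hx => by
            have hxi : x ≠ i := by simpa using hx
            simp [hs'def, Function.update_of_ne hxi])]
        simp [hs'def, hadef, hbdef]
      rw [← key, Finset.sum_sub_distrib]
    -- item-sum difference
    have hitem : (∑ l, Real.log (Nat.factorial (N s' l)))
        - (∑ l, Real.log (Nat.factorial (N s l)))
        = Real.log A - Real.log B := by
      have key : ∑ l, (Real.log (Nat.factorial (N s' l)) - Real.log (Nat.factorial (N s l)))
          = Real.log A - Real.log B := by
        rw [← Finset.sum_subset (Finset.subset_univ ({j, s i} : Finset (Fin m)))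
          (fun x _ hx => by
            simp only [Finset.mem_insert, Finset.mem_singleton, not_or] at hx
            rw [hcount3 x hx.1 hx.2]; ring)]
        rw [Finset.sum_pair hj]
        have e1 : Real.log (Nat.factorial (N s' j)) - Real.log (Nat.factorial (N s j))
            = Real.log A := by
          rw [hcount1, Nat.factorial_succ, hAdef]
          push_cast
          rw [Real.log_mul (by positivity) (by exact_mod_cast (Nat.factorial_pos _).ne')]
          ring
        have e2 : Real.log (Nat.factorial (N s' (s i))) - Real.log (Nat.factorial (N s (s i)))
            = -Real.log B := by
          obtain ⟨c, hc⟩ : ∃ c, N s (s i) = c + 1 := ⟨N s (s i) - 1, by omega⟩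
          have h2' : N s' (s i) = c := by omega
          rw [h2', hBdef, hc, Nat.factorial_succ]
          push_cast
          rw [Real.log_mul (by positivity) (by exact_mod_cast (Nat.factorial_pos c).ne')]
          ring
        rw [e1, e2]
        ring
      rw [← key, Finset.sum_sub_distrib]
    -- the potential strictly increases
    have hgain : f a - f b > Real.log A - Real.log B := by
      have hfa : f a = Real.log a := by rw [hfdef]; simp [hapos.ne']
      by_cases hb : b = 0
      · have hfb0 : f b = -M := by rw [hfdef, hb]; simp
        rw [hfa, hfb0]
        have hlogB : 0 ≤ Real.log B := Real.log_nonneg (by rw [hBdef]; exact_mod_cast hNsi)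
        have hlogA : Real.log A ≤ Real.log ((n:ℝ) + 1) := Real.log_le_log hApos hAn
        have hSa : |Real.log a| ≤ S := by
          have := Finset.single_le_sum
            (f := fun p : Fin n × Fin m => |if v p.1 p.2 = 0 then (0:ℝ) else Real.log (v p.1 p.2)|)
            (fun p _ => abs_nonneg _) (Finset.mem_univ (i, j))
          rw [hSdef]
          simpa [hadef, (show v i j ≠ 0 from hapos.ne')] using this
        have hna : -Real.log a ≤ S := (neg_le_abs _).trans hSa
        rw [hMdef]
        linarith
      · have hbpos : 0 < b := lt_of_le_of_ne (hv i (s i)) (Ne.symm hb)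
        have hfb : f b = Real.log b := by rw [hfdef]; simp [hb]
        rw [hfa, hfb]
        have hmul : b * A < a * B := (div_lt_div_iff₀ hBpos hApos).mp hlt
        have : Real.log (b * A) < Real.log (a * B) :=
          Real.log_lt_log (mul_pos hbpos hApos) hmul
        rw [Real.log_mul hb hApos.ne', Real.log_mul hapos.ne' hBpos.ne'] at this
        linarith
    have : Φ s < Φ s' := by
      have h1 := hplayer
      have h2 := hitem
      rw [hΦdef]
      simp only
      linarith
    exact absurd (hs s') (not_le.mpr this)
end

section
/- In a Chinese auction with costly continuous budgets and symmetric strictly positive valuations (v_{i,j} = v_j > 0 for all players i), the strategy profile in which every player i allocates x_{i,j} = ((n−1)/n²)·v_j on each item j is a symmetric pure Nash equilibrium: no player can strictly increase their utility by deviating to any other nonnegative allocation vector y ∈ ℝ_{≥0}^m. -/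
/-- Utility of player `i` in a Chinese auction with costly continuous budgets and
symmetric valuations `v : Fin m → ℝ`: expected value won minus the weight spent. -/
noncomputable def cutilSym {n m : ℕ} (v : Fin m → ℝ) (x : Fin n → Fin m → ℝ)
    (i : Fin n) : ℝ :=
  ∑ j, ((if 0 < ∑ k, x k j then x i j / (∑ k, x k j) else 0) * v j - x i j)

lemma key_ineq (N V y : ℝ) (hN : 2 ≤ N) (hV : 0 < V) (hy : 0 ≤ y) :
    y / (y + (N - 1) * ((N - 1) / N ^ 2 * V)) * V - y ≤ V / N ^ 2 := by
  have hN0 : 0 < N := by linarith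
  have hS : 0 < (N - 1) * ((N - 1) / N ^ 2 * V) := by
    have h1 : 0 < N - 1 := by linarith
    positivity
  have hden : 0 < y + (N - 1) * ((N - 1) / N ^ 2 * V) := by linarith
  rw [div_mul_eq_mul_div, sub_le_iff_le_add, div_le_iff₀ hden]
  have hkey : (V / N ^ 2 + y) * (y + (N - 1) * ((N - 1) / N ^ 2 * V)) - y * V
      = (y - (N - 1) / N ^ 2 * V) ^ 2 := by
    field_simp
    ring
  nlinarith [sq_nonneg (y - (N - 1) / N ^ 2 * V), hkey]

/-- In a Chinese auction with costly continuous budgets and symmetric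
strictly positive valuations, the profile in which every player allocates
`((n-1)/n²) * v j` on each item `j` is a symmetric pure Nash equilibrium: no player
can strictly increase their utility by deviating to any other nonnegative allocation. -/
theorem stmt12 {n m : ℕ} (hn : 2 ≤ n)
    (v : Fin m → ℝ) (hv : ∀ j, 0 < v j)
    (x : Fin n → Fin m → ℝ)
    (hx : ∀ i j, x i j = (((n : ℝ) - 1) / (n : ℝ) ^ 2) * v j) :
    ∀ i : Fin n, ∀ y : Fin m → ℝ, (∀ j, 0 ≤ y j) →
      cutilSym v (Function.update x i y) i ≤ cutilSym v x i := by
  intro i y hy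
  unfold cutilSym
  apply Finset.sum_le_sum
  intro j _
  have hN : (2 : ℝ) ≤ (n : ℝ) := by exact_mod_cast hn
  have hN0 : (0 : ℝ) < n := by linarith
  set c : ℝ := ((n : ℝ) - 1) / (n : ℝ) ^ 2 with hc
  have hcpos : 0 < c := by
    have : (0:ℝ) < (n:ℝ) - 1 := by linarith
    positivity
  have hVpos := hv j
  -- sum for profile x
  have hsumx : ∑ k, x k j = (n : ℝ) * (c * v j) := by
    simp [hx, Finset.sum_const, Finset.card_univ, mul_comm, mul_assoc]
  have hsumx_pos : 0 < ∑ k, x k j := by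
    rw [hsumx]; positivity
  -- sum for updated profile
  have hg : (fun k => Function.update x i y k j) = Function.update (fun k => x k j) i (y j) := by
    funext k
    by_cases h : k = i <;> simp [h, Function.update_apply]
  have hsumu : ∑ k, Function.update x i y k j = y j + ((n : ℝ) - 1) * (c * v j) := by
    calc ∑ k, Function.update x i y k j
        = ∑ k, Function.update (fun k => x k j) i (y j) k := by rw [hg]
      _ = y j + ∑ k ∈ Finset.univ \ {i}, x k j := by
          rw [Finset.sum_update_of_mem (Finset.mem_univ i)]
      _ = y j + ((n : ℝ) - 1) * (c * v j) := by
          have hcard : (Finset.univ \ {i} : Finset (Fin n)).card = n - 1 := by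
            rw [Finset.sdiff_singleton_eq_erase, Finset.card_erase_of_mem (Finset.mem_univ i),
              Finset.card_univ, Fintype.card_fin]
          have : ∑ k ∈ Finset.univ \ {i}, x k j = ((n : ℕ) - 1 : ℕ) * (c * v j) := by
            simp [hx, Finset.sum_const, hcard]
          rw [this]
          have : ((n - 1 : ℕ) : ℝ) = (n : ℝ) - 1 := by
            have : 1 ≤ n := by omega
            push_cast [this]; ring
          rw [this]
  have hsumu_pos : 0 < ∑ k, Function.update x i y k j := by
    rw [hsumu]
    have : 0 < ((n : ℝ) - 1) * (c * v j) := by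
      have : (0:ℝ) < (n:ℝ) - 1 := by linarith
      positivity
    have := hy j
    linarith
  rw [if_pos hsumx_pos, if_pos hsumu_pos, hsumu, hsumx,
    Function.update_self, hx i j]
  have hcv : c * v j ≠ 0 := by positivity
  have hx_term : c * v j / ((n : ℝ) * (c * v j)) * v j - c * v j = v j / (n : ℝ) ^ 2 := by
    rw [mul_comm ((n : ℝ)) (c * v j), div_mul_eq_div_div, div_self hcv, hc]
    field_simp
    ring
  rw [hx_term, hc]
  exact key_ineq (n : ℝ) (v j) (y j) hN hVpos (hy j)
end

section
/- The two-player, two-item Chinese auction with costly continuous budgets in which v_{1,1} = 1, v_{1,2} = 0, v_{2,1} = 1, v_{2,2} = 1 has no pure Nash equilibrium. (Hence Chinese auctions with asymmetric valuations and costly continuous budgets need not have a pure Nash equilibrium when some valuations are zero.) -/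
/-- Utility of player `i` in a Chinese auction with costly continuous budgets:
expected value won minus the weight spent. -/
noncomputable def cutil {n m : ℕ} (v : Fin n → Fin m → ℝ) (x : Fin n → Fin m → ℝ)
    (i : Fin n) : ℝ :=
  ∑ j, ((if 0 < ∑ k, x k j then x i j / (∑ k, x k j) else 0) * v i j - x i j)

/-- The two-player, two-item Chinese auction with costly continuous
budgets and valuations `v₁ = (1,0)`, `v₂ = (1,1)` has no pure Nash equilibrium. -/
theorem stmt14 :
    ¬ ∃ x : Fin 2 → Fin 2 → ℝ,
      (∀ i j, 0 ≤ x i j) ∧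
      (∀ i : Fin 2, ∀ y : Fin 2 → ℝ, (∀ j, 0 ≤ y j) →
        cutil ![![1, 0], ![1, 1]] (Function.update x i y) i ≤
          cutil ![![1, 0], ![1, 1]] x i) := by
  rintro ⟨x, hnn, hne⟩
  rcases lt_or_eq_of_le (hnn 0 1) with hb | hb
  · -- Player 0 spends a positive amount on item 1 (which it values at 0):
    -- deviating to spend 0 on item 1 strictly improves utility.
    have h := hne 0 ![x 0 0, 0] (by intro j; fin_cases j <;> simp [hnn 0 0])
    simp [cutil, Fin.sum_univ_two, Function.update] at h
    linarith
  · rcases lt_or_eq_of_le (hnn 1 1) with hd | hd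
    · -- Player 1 is alone on item 1 with a positive spend: halving it improves utility.
      have h := hne 1 ![x 1 0, x 1 1 / 2] (by
        intro j; fin_cases j <;> simp [hnn 1 0]; linarith)
      simp [cutil, Fin.sum_univ_two, Function.update, ← hb] at h
      rw [if_pos hd, if_pos hd, div_self hd.ne',
        div_self (by positivity : x 1 1 / 2 ≠ 0)] at h
      linarith
    · -- Nobody spends on item 1: player 1 can grab it for 1/2, gaining 1/2.
      have h := hne 1 ![x 1 0, 1/2] (by intro j; fin_cases j <;> norm_num [hnn 1 0])
      simp [cutil, Fin.sum_univ_two, Function.update, ← hb, ← hd] at h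
      linarith
end

section
/- Consider a Chinese auction with costly continuous budgets, arbitrary (possibly asymmetric, possibly zero) valuations v_{i,j} ≥ 0, in which the auctioneer places a ticket of weight Δ_j > 0 in the basket of each item j, so that the utility of player i at profile x is u_i(x) = Σ_{j=1}^m ((x_{i,j}/(Δ_j + Σ_{k=1}^n x_{k,j})) v_{i,j} − x_{i,j}), and each player i's strategy space is S_i = { y ∈ ℝ^m : 0 ≤ y_j ≤ v_{i,j} for all j }. Then this game has a pure Nash equilibrium. -/
/-- Best-response mass of a player with valuation `w` when total ticket mass is `T`. -/
noncomputable def psiAuc (w T : ℝ) : ℝ := max 0 (T * (w - T) / w)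

lemma psiAuc_nonneg (w T : ℝ) : 0 ≤ psiAuc w T := le_max_left _ _

lemma psiAuc_le (w T : ℝ) (hw : 0 ≤ w) (hT : 0 ≤ T) : psiAuc w T ≤ w := by
  unfold psiAuc
  apply max_le hw
  rcases eq_or_lt_of_le hw with h | h
  · simp [← h]
  · rw [div_le_iff₀ h]
    nlinarith [sq_nonneg (w - T), sq_nonneg T]

lemma psiAuc_eq_zero (w T : ℝ) (hw : 0 ≤ w) (hwt : w ≤ T) (hT : 0 < T) :
    psiAuc w T = 0 := by
  unfold psiAuc
  apply max_eq_left
  apply div_nonpos_of_nonpos_of_nonneg _ hw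
  exact mul_nonpos_of_nonneg_of_nonpos hT.le (by linarith)

lemma key0 (v D t : ℝ) (hD : 0 < D) (ht : 0 ≤ t) (hvD : v ≤ D) :
    t / (D + t) * v - t ≤ 0 := by
  have h1 : 0 < D + t := by linarith
  rw [div_mul_eq_mul_div, sub_nonpos, div_le_iff₀ h1]
  nlinarith

lemma key2 (v D t T : ℝ) (hD : 0 < D) (hDT : D < T) (ht : 0 ≤ t)
    (hvD : v * D = T ^ 2) :
    t / (D + t) * v - t ≤ (T - D) / T * v - (T - D) := by
  have h1 : 0 < D + t := by linarith
  have h2 : 0 < T := by linarith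
  have hv : v = T ^ 2 / D := by rw [eq_div_iff hD.ne']; exact hvD
  subst hv
  have hE : ((T - D) / T * (T ^ 2 / D) - (T - D)) - (t / (D + t) * (T ^ 2 / D) - t)
      = (T - D - t) ^ 2 / (D + t) := by
    field_simp
    ring
  have h3 : 0 ≤ (T - D - t) ^ 2 / (D + t) := div_nonneg (sq_nonneg _) h1.le
  linarith


/-- Utility of player `i` in a Chinese auction with costly budgets in which the
auctioneer has placed a ticket of weight `Δ j > 0` in the basket of each item `j`. -/
noncomputable def cutilAuc {n m : ℕ} (v : Fin n → Fin m → ℝ) (Δ : Fin m → ℝ)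
    (x : Fin n → Fin m → ℝ) (i : Fin n) : ℝ :=
  ∑ j, ((x i j / (Δ j + ∑ k, x k j)) * v i j - x i j)

/-- With arbitrary nonnegative (possibly asymmetric, possibly zero)
valuations and costly continuous budgets, if the auctioneer places a strictly positive
ticket `Δ j` in each basket and each player `i`'s strategy space is
`{y : 0 ≤ y j ≤ v i j for all j}`, then the game has a pure Nash equilibrium. -/
theorem stmt15 {n m : ℕ}
    (v : Fin n → Fin m → ℝ) (hv : ∀ i j, 0 ≤ v i j)
    (Δ : Fin m → ℝ) (hΔ : ∀ j, 0 < Δ j) :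
    ∃ x : Fin n → Fin m → ℝ,
      (∀ i j, 0 ≤ x i j ∧ x i j ≤ v i j) ∧
      (∀ i : Fin n, ∀ y : Fin m → ℝ, (∀ j, 0 ≤ y j ∧ y j ≤ v i j) →
        cutilAuc v Δ (Function.update x i y) i ≤ cutilAuc v Δ x i) := by
  -- Step 1: per-item fixed point for the total ticket mass.
  have hT : ∀ j : Fin m, ∃ T : ℝ, Δ j ≤ T ∧ Δ j + ∑ i, psiAuc (v i j) T = T := by
    intro j
    set B : ℝ := Δ j + ∑ i, v i j with hB
    have hB1 : Δ j ≤ B := by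
      have : 0 ≤ ∑ i, v i j := Finset.sum_nonneg fun i _ => hv i j
      simp [hB]; linarith
    set f : ℝ → ℝ := fun T => Δ j + ∑ i, psiAuc (v i j) T - T with hf
    have hc : Continuous f := by
      apply Continuous.sub _ continuous_id
      apply Continuous.add continuous_const
      apply continuous_finset_sum
      intro i _
      exact continuous_const.max
        ((continuous_id.mul (continuous_const.sub continuous_id)).div_const _)
    have hfa : 0 ≤ f (Δ j) := by
      have : 0 ≤ ∑ i, psiAuc (v i j) (Δ j) :=
        Finset.sum_nonneg fun i _ => psiAuc_nonneg _ _
      simp [hf]; linarith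
    have hfb : f B ≤ 0 := by
      have : ∑ i, psiAuc (v i j) B ≤ ∑ i, v i j :=
        Finset.sum_le_sum fun i _ => psiAuc_le _ _ (hv i j) (le_trans (hΔ j).le hB1)
      simp [hf, hB]; linarith
    have := intermediate_value_Icc' hB1 hc.continuousOn
    obtain ⟨T, hTmem, hfT⟩ := this ⟨hfb, hfa⟩
    exact ⟨T, hTmem.1, by simp [hf] at hfT; linarith⟩
  choose T hT1 hT2 using hT
  have hTpos : ∀ j, 0 < T j := fun j => lt_of_lt_of_le (hΔ j) (hT1 j)
  refine ⟨fun i j => psiAuc (v i j) (T j), fun i j =>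
    ⟨psiAuc_nonneg _ _, psiAuc_le _ _ (hv i j) (hTpos j).le⟩, ?_⟩
  intro i y hy
  set x : Fin n → Fin m → ℝ := fun i j => psiAuc (v i j) (T j) with hx
  unfold cutilAuc
  apply Finset.sum_le_sum
  intro j _
  -- rewrite sums
  have hsum : ∑ k, x k j = x i j + ∑ k ∈ Finset.univ \ {i}, x k j :=
    Finset.sum_eq_add_sum_sdiff_singleton_of_mem (Finset.mem_univ i) _
  have hupdfun : (fun k => Function.update x i y k j)
      = Function.update (fun k => x k j) i (y j) := by
    funext k
    by_cases h : k = i <;> simp [h, Function.update]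
  have hupdsum : ∑ k, Function.update x i y k j
      = y j + ∑ k ∈ Finset.univ \ {i}, x k j := by
    rw [hupdfun, Finset.sum_update_of_mem (Finset.mem_univ i)]
  set S : ℝ := ∑ k ∈ Finset.univ \ {i}, x k j with hS
  have hS0 : 0 ≤ S := Finset.sum_nonneg fun k _ => psiAuc_nonneg _ _
  set D : ℝ := Δ j + S with hD
  have hDpos : 0 < D := by have := hΔ j; simp [hD]; linarith
  have hDx : D + x i j = T j := by
    have := hT2 j
    rw [show ∑ k, psiAuc (v k j) (T j) = ∑ k, x k j from rfl, hsum] at this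
    simp [hD]; linarith
  have hupd : Function.update x i y i j = y j := by simp
  rw [hupd, hupdsum, hsum]
  have hΔS : Δ j + (y j + S) = D + y j := by simp [hD]; ring
  have hΔS2 : Δ j + (x i j + S) = D + x i j := by simp [hD]; ring
  rw [hΔS, hΔS2]
  have hyj := (hy j).1
  rcases le_or_gt (v i j) (T j) with hcase | hcase
  · -- x i j = 0, D = T j
    have hxz : x i j = 0 := psiAuc_eq_zero _ _ (hv i j) hcase (hTpos j)
    rw [hxz]
    simp only [zero_div, zero_mul, sub_zero, add_zero]
    have hDT : D = T j := by rw [← hDx, hxz, add_zero]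
    have := key0 (v i j) D (y j) hDpos hyj (by rw [hDT]; exact hcase)
    simpa using this
  · -- interior case
    have hwpos : 0 < v i j := lt_trans (hTpos j) hcase
    have hpsi : x i j = T j * (v i j - T j) / v i j := by
      show psiAuc (v i j) (T j) = _
      unfold psiAuc
      exact max_eq_right (div_nonneg
        (mul_nonneg (hTpos j).le (by linarith)) hwpos.le)
    have hppos : 0 < x i j := by
      rw [hpsi]
      exact div_pos (mul_pos (hTpos j) (by linarith)) hwpos
    have hDT : D < T j := by linarith
    have hvD : v i j * D = T j ^ 2 := by
      have hDval : D = T j - x i j := by linarith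
      rw [hDval, hpsi]
      field_simp
      ring
    have := key2 (v i j) D (y j) (T j) hDpos hDT hyj hvD
    have hTD : T j - D = x i j := by linarith
    rw [hTD] at this
    rw [hDx]
    exact this
end
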